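/- With the quantities of the previous block-system result, at the saddle point the value of the quadratic criterion satisfies (k/2) λ̃'Ωλ̃ + ((n−k)/2) η̃'Ωη̃ = (k/2)(ĝ¹)'Ω^{-1}ĝ¹ + ((n−k)/2)(ĝ²)'Ω^{-1}ĝ² − (n/2) ĝ' H Σ^{-1} H' ĝ, where λ̃ = −(Ω^{-1}ĝ¹ − HΣ^{-1}H'ĝ), η̃ = −(Ω^{-1}ĝ² − HΣ^{-1}H'ĝ), Σ = (G'Ω^{-1}G)^{-1}, H = Ω^{-1}GΣ, and ĝ = (kĝ¹ + (n−k)ĝ²)/n. -/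

import Mathlib

open Matrix

lemma dp_mulVec_left {m n : ℕ} (A : Matrix (Fin m) (Fin n) ℝ) (x : Fin n → ℝ) (y : Fin m → ℝ) :
    (A *ᵥ x) ⬝ᵥ y = x ⬝ᵥ (Aᵀ *ᵥ y) := by
  calc (A *ᵥ x) ⬝ᵥ y = y ⬝ᵥ (A *ᵥ x) := dotProduct_comm _ _
    _ = (y ᵥ* A) ⬝ᵥ x := dotProduct_mulVec _ _ _
    _ = x ⬝ᵥ (y ᵥ* A) := dotProduct_comm _ _
    _ = x ⬝ᵥ (Aᵀ *ᵥ y) := by rw [mulVec_transpose]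

/-- Saddle-point value identity (used in eq. A12): with
`λ̃ = −(Ω⁻¹ĝ¹ − HΣ⁻¹H'ĝ)` and `η̃ = −(Ω⁻¹ĝ² − HΣ⁻¹H'ĝ)`,
`(k/2) λ̃'Ωλ̃ + ((n−k)/2) η̃'Ωη̃
  = (k/2)(ĝ¹)'Ω⁻¹ĝ¹ + ((n−k)/2)(ĝ²)'Ω⁻¹ĝ² − (n/2) ĝ'HΣ⁻¹H'ĝ`. -/
theorem stmt_8 (m p k n : ℕ) (hk : 0 < k) (hkn : k < n)
    (Om : Matrix (Fin m) (Fin m) ℝ) (hOm : Om.PosDef) (hOmSym : Om.IsSymm)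
    (G : Matrix (Fin m) (Fin p) ℝ) (hG : G.rank = p)
    (g1 g2 : Fin m → ℝ)
    (Sig : Matrix (Fin p) (Fin p) ℝ) (hSig : Sig = (Gᵀ * Om⁻¹ * G)⁻¹)
    (H : Matrix (Fin m) (Fin p) ℝ) (hH : H = Om⁻¹ * G * Sig)
    (ghat : Fin m → ℝ)
    (hghat : ghat = ((k : ℝ) / (n : ℝ)) • g1 + (((n : ℝ) - (k : ℝ)) / (n : ℝ)) • g2)
    (lam eta : Fin m → ℝ)
    (hlam : lam = -(Om⁻¹.mulVec g1 - (H * Sig⁻¹ * Hᵀ).mulVec ghat))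
    (heta : eta = -(Om⁻¹.mulVec g2 - (H * Sig⁻¹ * Hᵀ).mulVec ghat)) :
    ((k : ℝ) / 2) * (lam ⬝ᵥ Om.mulVec lam) +
      (((n : ℝ) - (k : ℝ)) / 2) * (eta ⬝ᵥ Om.mulVec eta) =
    ((k : ℝ) / 2) * (g1 ⬝ᵥ Om⁻¹.mulVec g1) +
      (((n : ℝ) - (k : ℝ)) / 2) * (g2 ⬝ᵥ Om⁻¹.mulVec g2) -
      ((n : ℝ) / 2) * (ghat ⬝ᵥ (H * Sig⁻¹ * Hᵀ).mulVec ghat) := by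
  have hOmdet : IsUnit Om.det := isUnit_iff_ne_zero.mpr hOm.det_pos.ne'
  have hOminv_pd : Om⁻¹.PosDef := hOm.inv
  have hOminvSym : Om⁻¹ᵀ = Om⁻¹ := by
    rw [transpose_nonsing_inv, hOmSym.eq]
  -- injectivity of `G.mulVec`
  have hGinj : Function.Injective G.mulVec := by
    rw [← Matrix.coe_mulVecLin, ← LinearMap.ker_eq_bot]
    have h := G.mulVecLin.finrank_range_add_finrank_ker
    have hrank : Module.finrank ℝ (LinearMap.range G.mulVecLin) = p := hG
    rw [hrank, Module.finrank_pi, Fintype.card_fin] at h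
    exact Submodule.finrank_eq_zero.mp (by omega)
  -- positive definiteness of `A = Gᵀ Ω⁻¹ G`
  set A : Matrix (Fin p) (Fin p) ℝ := Gᵀ * Om⁻¹ * G with hA
  have hATr : Aᵀ = A := by
    rw [hA]; simp only [transpose_mul, transpose_transpose, hOminvSym, Matrix.mul_assoc]
  have hApd : A.PosDef := by
    refine PosDef.of_dotProduct_mulVec_pos ?_ (fun x hx => ?_)
    · show Aᴴ = A
      rw [conjTranspose_eq_transpose_of_trivial, hATr]
    · have hGx : G *ᵥ x ≠ 0 := fun hz => hx (hGinj (by simpa using hz))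
      have h2 := hOminv_pd.dotProduct_mulVec_pos hGx
      have key : x ⬝ᵥ A *ᵥ x = (G *ᵥ x) ⬝ᵥ Om⁻¹ *ᵥ (G *ᵥ x) := by
        rw [hA, ← Matrix.mulVec_mulVec, ← Matrix.mulVec_mulVec, ← dp_mulVec_left]
      simp only [star_trivial] at h2 ⊢
      rw [key]
      exact h2
  have hAdet : IsUnit A.det := isUnit_iff_ne_zero.mpr hApd.det_pos.ne'
  have hSigInv : Sig⁻¹ = A := by rw [hSig, nonsing_inv_nonsing_inv _ hAdet]
  have hSigA : Sig * A = 1 := by rw [hSig, nonsing_inv_mul _ hAdet]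
  have hSigTr : Sigᵀ = Sig := by
    rw [hSig, transpose_nonsing_inv, hATr]
  have hHT : Hᵀ = Sig * (Gᵀ * Om⁻¹) := by
    rw [hH, transpose_mul, transpose_mul, hOminvSym, hSigTr]
  -- the projection-type matrix
  set P : Matrix (Fin m) (Fin m) ℝ := H * Sig⁻¹ * Hᵀ with hP
  have hPval : P = Om⁻¹ * G * Sig * Gᵀ * Om⁻¹ := by
    calc P = Om⁻¹ * G * (Sig * A * Sig) * (Gᵀ * Om⁻¹) := by
            rw [hP, hHT, hH, hSigInv]; simp only [Matrix.mul_assoc]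
      _ = Om⁻¹ * G * Sig * Gᵀ * Om⁻¹ := by rw [hSigA, Matrix.one_mul]; simp only [Matrix.mul_assoc]
  have hPTr : Pᵀ = P := by
    rw [hPval]
    simp only [transpose_mul, transpose_transpose, hOminvSym, hSigTr, Matrix.mul_assoc]
  have hOmOminv : Om * Om⁻¹ = 1 := mul_nonsing_inv _ hOmdet
  have hOminvOm : Om⁻¹ * Om = 1 := nonsing_inv_mul _ hOmdet
  have hPOP : P * Om * P = P := by
    calc P * Om * P
        = Om⁻¹ * G * Sig * (Gᵀ * (Om⁻¹ * Om * Om⁻¹) * G) * Sig * (Gᵀ * Om⁻¹) := by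
          rw [hPval]; simp only [Matrix.mul_assoc]
      _ = Om⁻¹ * G * (Sig * A) * Sig * (Gᵀ * Om⁻¹) := by
          rw [hOminvOm, Matrix.one_mul, ← hA]; simp only [Matrix.mul_assoc]
      _ = Om⁻¹ * G * Sig * (Gᵀ * Om⁻¹) := by rw [hSigA, Matrix.mul_one]
      _ = P := by rw [hPval]; simp only [Matrix.mul_assoc]
  -- quadratic form expansion
  have quad : ∀ g : Fin m → ℝ,
      (-(Om⁻¹ *ᵥ g - P *ᵥ ghat)) ⬝ᵥ Om *ᵥ (-(Om⁻¹ *ᵥ g - P *ᵥ ghat)) =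
        g ⬝ᵥ Om⁻¹ *ᵥ g - 2 * (g ⬝ᵥ P *ᵥ ghat) + ghat ⬝ᵥ P *ᵥ ghat := by
    intro g
    have T11 : (Om⁻¹ *ᵥ g) ⬝ᵥ Om *ᵥ (Om⁻¹ *ᵥ g) = g ⬝ᵥ Om⁻¹ *ᵥ g := by
      rw [mulVec_mulVec, hOmOminv, one_mulVec, dotProduct_comm]
    have T12 : (Om⁻¹ *ᵥ g) ⬝ᵥ Om *ᵥ (P *ᵥ ghat) = g ⬝ᵥ P *ᵥ ghat := by
      rw [mulVec_mulVec, dp_mulVec_left, hOminvSym, mulVec_mulVec, ← mul_assoc,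
        hOminvOm, one_mul]
    have T21 : (P *ᵥ ghat) ⬝ᵥ Om *ᵥ (Om⁻¹ *ᵥ g) = g ⬝ᵥ P *ᵥ ghat := by
      rw [mulVec_mulVec, hOmOminv, one_mulVec, dotProduct_comm]
    have T22 : (P *ᵥ ghat) ⬝ᵥ Om *ᵥ (P *ᵥ ghat) = ghat ⬝ᵥ P *ᵥ ghat := by
      rw [mulVec_mulVec, dp_mulVec_left, hPTr, mulVec_mulVec, ← mul_assoc, hPOP]
    rw [neg_dotProduct, mulVec_neg, dotProduct_neg, neg_neg, sub_dotProduct, mulVec_sub,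
      dotProduct_sub, dotProduct_sub, T11, T12, T21, T22]
    ring
  have hq1 := quad g1
  have hq2 := quad g2
  rw [hlam, heta, ← hP] at *
  rw [hq1, hq2]
  -- relation between the cross terms
  have hn : (n : ℝ) ≠ 0 := Nat.cast_ne_zero.mpr (by omega)
  have hb : ghat ⬝ᵥ P *ᵥ ghat =
      ((k : ℝ) / (n : ℝ)) * (g1 ⬝ᵥ P *ᵥ ghat) +
        (((n : ℝ) - (k : ℝ)) / (n : ℝ)) * (g2 ⬝ᵥ P *ᵥ ghat) := by
    nth_rewrite 1 [hghat]
    rw [add_dotProduct, smul_dotProduct, smul_dotProduct, smul_eq_mul, smul_eq_mul]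
  rw [hb]
  field_simp
  ring
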